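/- Fix ξ > 0 and set ℓ₁ := arcsinh(ξ) and ℓ₂ := 2·arcsinh(ξ/2). The function ℓ ↦ f_ξ(ℓ) is differentiable at every ℓ ∈ (0,∞) \ {ℓ₁, ℓ₂}, with derivative: f_ξ′(ℓ) = 2/ξ² for 0 < ℓ < ℓ₁; f_ξ′(ℓ) = (2/ξ²)·(1 − 2·sinh ℓ/√(sinh²ℓ − ξ²)) for ℓ₁ < ℓ < ℓ₂; and f_ξ′(ℓ) = (2/ξ²)·(1 − sinh ℓ/√(sinh²ℓ − ξ²)) for ℓ > ℓ₂. -/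

import Mathlib

open Matrix MeasureTheory Real Filter Topology
open scoped MatrixGroups Pointwise

noncomputable section

/-- `SL(2,ℝ)` as the special linear group of 2×2 real matrices. -/
abbrev SL2R := Matrix.SpecialLinearGroup (Fin 2) ℝ

instance : TopologicalSpace SL2R :=
  show TopologicalSpace {A : Matrix (Fin 2) (Fin 2) ℝ // A.det = 1} from inferInstance

instance : MeasurableSpace SL2R := borel SL2R

/-- Squared Frobenius norm `‖g‖² = a² + b² + c² + d²`. -/
def fnormSq (g : SL2R) : ℝ :=
  (g : Matrix (Fin 2) (Fin 2) ℝ) 0 0 ^ 2 + (g : Matrix (Fin 2) (Fin 2) ℝ) 0 1 ^ 2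
    + (g : Matrix (Fin 2) (Fin 2) ℝ) 1 0 ^ 2 + (g : Matrix (Fin 2) (Fin 2) ℝ) 1 1 ^ 2

/-- Frobenius norm `‖g‖`. -/
def fnorm (g : SL2R) : ℝ := Real.sqrt (fnormSq g)

/-- The angle `θ_g = arg((g·i − i)/(g·i + i)) ∈ (−π, π]`; equals `0` when `g·i = i`. -/
def theta (g : SL2R) : ℝ :=
  Complex.arg ((((g • UpperHalfPlane.I : UpperHalfPlane) : ℂ) - Complex.I)
    / (((g • UpperHalfPlane.I : UpperHalfPlane) : ℂ) + Complex.I))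

/-- Distance between two angles: the distance from `a − b` to the nearest element of `2πℤ`. -/
def angDist (a b : ℝ) : ℝ := |((a - b : ℝ) : Real.Angle).toReal|

/-- Inverse hyperbolic cosine. -/
def arccosh (x : ℝ) : ℝ := Real.log (x + Real.sqrt (x ^ 2 - 1))

/-- `ℓ(M) = arccosh(‖M‖²/2)`, the hyperbolic distance from `i` to `M·i`. -/
def ell (M : SL2R) : ℝ := arccosh (fnormSq M / 2)

/-- The pair-correlation density building block `f_ξ(ℓ)`. -/
def fxi (ξ l : ℝ) : ℝ :=
  if Real.sinh l ≤ ξ then 2 / ξ ^ 2 * l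
  else if 2 * Real.sinh (l / 2) ≤ ξ then
    2 / ξ ^ 2 * (l + Real.log (1 + ξ ^ 2)
      - 2 * Real.log (Real.cosh l + Real.sqrt (Real.sinh l ^ 2 - ξ ^ 2)))
  else 2 / ξ ^ 2 * (l - Real.log (Real.cosh l + Real.sqrt (Real.sinh l ^ 2 - ξ ^ 2)))

/-- The rotation matrix `k_φ ∈ SL(2,ℝ)`. -/
def kMat (φ : ℝ) : SL2R :=
  ⟨!![Real.cos (φ / 2), Real.sin (φ / 2); -Real.sin (φ / 2), Real.cos (φ / 2)], by
    rw [Matrix.det_fin_two_of]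
    linear_combination Real.sin_sq_add_cos_sq (φ / 2)⟩

/-- The diagonal matrix `a_t ∈ SL(2,ℝ)`. -/
def aMat (t : ℝ) : SL2R :=
  ⟨!![Real.exp (t / 2), 0; 0, Real.exp (-t / 2)], by
    rw [Matrix.det_fin_two_of, ← Real.exp_add]
    norm_num
    ring⟩

lemma log_cosh_sqrt_hasDerivAt (ξ : ℝ) (hξ : 0 < ξ) {l : ℝ} (h : ξ < Real.sinh l) :
    HasDerivAt (fun x => Real.log (Real.cosh x + Real.sqrt (Real.sinh x ^ 2 - ξ ^ 2)))
      (Real.sinh l / Real.sqrt (Real.sinh l ^ 2 - ξ ^ 2)) l := by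
  have hpos : 0 < Real.sinh l ^ 2 - ξ ^ 2 := by nlinarith
  have hs : 0 < Real.sqrt (Real.sinh l ^ 2 - ξ ^ 2) := Real.sqrt_pos.mpr hpos
  have hcosh : 0 < Real.cosh l := Real.cosh_pos l
  have h1 : HasDerivAt (fun x => Real.sinh x ^ 2 - ξ ^ 2)
      (2 * Real.sinh l ^ 1 * Real.cosh l) l := by
    have := ((Real.hasDerivAt_sinh l).pow 2).sub_const (ξ ^ 2)
    simpa using this
  have h2 := h1.sqrt (ne_of_gt hpos)
  have h3 : HasDerivAt (fun x => Real.cosh x + Real.sqrt (Real.sinh x ^ 2 - ξ ^ 2)) _ l :=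
    (Real.hasDerivAt_cosh l).add h2
  have h4 := h3.log (by positivity)
  convert h4 using 1
  have hsq : Real.sqrt (Real.sinh l ^ 2 - ξ ^ 2) ^ 2 = Real.sinh l ^ 2 - ξ ^ 2 :=
    Real.sq_sqrt hpos.le
  field_simp
  ring

/-- formula (2.22): the derivative of `ℓ ↦ f_ξ(ℓ)` away from the two
points of non-differentiability `ℓ₁ = arcsinh ξ` and `ℓ₂ = 2 arcsinh(ξ/2)`. -/
theorem fxi_hasDerivAt (ξ : ℝ) (hξ : 0 < ξ) :
    (∀ l : ℝ, 0 < l → l < Real.arsinh ξ →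
      HasDerivAt (fun x => fxi ξ x) (2 / ξ ^ 2) l) ∧
    (∀ l : ℝ, Real.arsinh ξ < l → l < 2 * Real.arsinh (ξ / 2) →
      HasDerivAt (fun x => fxi ξ x)
        (2 / ξ ^ 2 * (1 - 2 * Real.sinh l / Real.sqrt (Real.sinh l ^ 2 - ξ ^ 2))) l) ∧
    (∀ l : ℝ, 2 * Real.arsinh (ξ / 2) < l →
      HasDerivAt (fun x => fxi ξ x)
        (2 / ξ ^ 2 * (1 - Real.sinh l / Real.sqrt (Real.sinh l ^ 2 - ξ ^ 2))) l) := by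
  refine ⟨?_, ?_, ?_⟩
  · intro l _ hl2
    have hlt : Real.sinh l < ξ := by
      have := Real.sinh_lt_sinh.mpr hl2
      rwa [Real.sinh_arsinh] at this
    have hev : (fun x => fxi ξ x) =ᶠ[𝓝 l] fun x => 2 / ξ ^ 2 * x := by
      have hopen : IsOpen {x : ℝ | Real.sinh x < ξ} :=
        isOpen_lt Real.continuous_sinh continuous_const
      filter_upwards [hopen.mem_nhds hlt] with x hx
      simp only [fxi, if_pos (le_of_lt hx)]
    exact ((hasDerivAt_id l).const_mul (2 / ξ ^ 2)).congr_of_eventuallyEq hev |>.congr_deriv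
      (by ring)
  · intro l hl1 hl2
    have hgt : ξ < Real.sinh l := by
      have := Real.sinh_lt_sinh.mpr hl1
      rwa [Real.sinh_arsinh] at this
    have hlt : 2 * Real.sinh (l / 2) < ξ := by
      have : Real.sinh (l / 2) < Real.sinh (Real.arsinh (ξ / 2)) :=
        Real.sinh_lt_sinh.mpr (by linarith)
      rw [Real.sinh_arsinh] at this
      linarith
    have hev : (fun x => fxi ξ x) =ᶠ[𝓝 l] fun x =>
        2 / ξ ^ 2 * (x + Real.log (1 + ξ ^ 2)
          - 2 * Real.log (Real.cosh x + Real.sqrt (Real.sinh x ^ 2 - ξ ^ 2))) := by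
      have hc2 : Continuous fun x : ℝ => 2 * Real.sinh (x / 2) := by continuity
      have hopen : IsOpen {x : ℝ | ξ < Real.sinh x ∧ 2 * Real.sinh (x / 2) < ξ} :=
        (isOpen_lt continuous_const Real.continuous_sinh).inter
          (isOpen_lt hc2 continuous_const)
      filter_upwards [hopen.mem_nhds ⟨hgt, hlt⟩] with x hx
      simp only [fxi, if_neg (not_le.mpr hx.1), if_pos (le_of_lt hx.2)]
    have h1 : HasDerivAt (fun x =>
        2 / ξ ^ 2 * (x + Real.log (1 + ξ ^ 2)
          - 2 * Real.log (Real.cosh x + Real.sqrt (Real.sinh x ^ 2 - ξ ^ 2))))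
        (2 / ξ ^ 2 * (1 - 2 * (Real.sinh l / Real.sqrt (Real.sinh l ^ 2 - ξ ^ 2)))) l := by
      have := (((hasDerivAt_id l).add_const (Real.log (1 + ξ ^ 2))).sub
        ((log_cosh_sqrt_hasDerivAt ξ hξ hgt).const_mul 2)).const_mul (2 / ξ ^ 2)
      simpa using this
    exact (h1.congr_of_eventuallyEq hev).congr_deriv (by ring)
  · intro l hl
    have hgt2 : ξ < 2 * Real.sinh (l / 2) := by
      have : Real.sinh (Real.arsinh (ξ / 2)) < Real.sinh (l / 2) :=
        Real.sinh_lt_sinh.mpr (by linarith)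
      rw [Real.sinh_arsinh] at this
      linarith
    have hgt : ξ < Real.sinh l := by
      have hsl : Real.sinh l = 2 * Real.sinh (l / 2) * Real.cosh (l / 2) := by
        rw [show l = 2 * (l / 2) by ring, Real.sinh_two_mul]
        ring_nf
      have hc : 1 ≤ Real.cosh (l / 2) := Real.one_le_cosh (l / 2)
      nlinarith
    have hev : (fun x => fxi ξ x) =ᶠ[𝓝 l] fun x =>
        2 / ξ ^ 2 * (x - Real.log (Real.cosh x + Real.sqrt (Real.sinh x ^ 2 - ξ ^ 2))) := by
      have hc2 : Continuous fun x : ℝ => 2 * Real.sinh (x / 2) := by continuity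
      have hopen : IsOpen {x : ℝ | ξ < 2 * Real.sinh (x / 2)} :=
        isOpen_lt continuous_const hc2
      filter_upwards [hopen.mem_nhds hgt2] with x hx
      have hx' : ξ < Real.sinh x := by
        have hsl : Real.sinh x = 2 * Real.sinh (x / 2) * Real.cosh (x / 2) := by
          rw [show x = 2 * (x / 2) by ring, Real.sinh_two_mul]
          ring_nf
        have hc : 1 ≤ Real.cosh (x / 2) := Real.one_le_cosh (x / 2)
        nlinarith
      simp only [fxi, if_neg (not_le.mpr hx'), if_neg (not_le.mpr hx)]
    have h1 : HasDerivAt (fun x =>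
        2 / ξ ^ 2 * (x - Real.log (Real.cosh x + Real.sqrt (Real.sinh x ^ 2 - ξ ^ 2))))
        (2 / ξ ^ 2 * (1 - Real.sinh l / Real.sqrt (Real.sinh l ^ 2 - ξ ^ 2))) l := by
      have := ((hasDerivAt_id l).sub (log_cosh_sqrt_hasDerivAt ξ hξ hgt)).const_mul (2 / ξ ^ 2)
      simpa using this
    exact h1.congr_of_eventuallyEq hev
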